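/- Let X and Y be nonempty metric spaces, and equip X × Y with the metric δ((x₁,y₁),(x₂,y₂)) := max{δ_X(x₁,x₂), δ_Y(y₁,y₂)}. Then d∞(X × Y) ≤ d∞(X) + d∞(Y). -/
import Mathlib


open Metric Filter Topology Set

/-- Logarithm of an extended natural number, valued in `EReal` (`⊤` for `⊤`). -/
noncomputable def elog (n : ℕ∞) : EReal :=
  if n = ⊤ then ⊤ else ((Real.log (n.toNat : ℝ) : ℝ) : EReal)

/-- `coverNum r Ω` : the least number of open balls of radius `r` needed to cover `Ω`,
valued in `ℕ∞` (it is `⊤` if no finite cover exists). -/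
noncomputable def coverNum {X : Type*} [MetricSpace X] (r : ℝ) (Ω : Set X) : ℕ∞ :=
  sInf ((fun s : Finset X => (s.card : ℕ∞)) ''
    {s : Finset X | Ω ⊆ ⋃ x ∈ s, Metric.ball x r})

/-- The asymptotic dimension with base point `x`:
`d∞(X) = lim_{r→∞} limsup_{R→∞} log n_r(B(x,R)) / log R`; the limit in `r` exists since the
inner expression is nonincreasing in `r`, hence equals the infimum over `r > 0`. -/
noncomputable def asympDim {X : Type*} [MetricSpace X] (x : X) : EReal :=
  ⨅ (r : ℝ) (_ : 0 < r),
    Filter.limsup (fun R : ℝ => ((Real.log R)⁻¹ : EReal) * elog (coverNum r (Metric.ball x R)))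
      Filter.atTop

/-- The asymptotic dimension of a metric space (independent of the base point). -/
noncomputable def asympDimSpace (X : Type*) [MetricSpace X] : EReal :=
  ⨆ x : X, asympDim x

lemma elog_nonneg (n : ℕ∞) : 0 ≤ elog n := by
  unfold elog
  split
  · exact le_top
  · rcases Nat.eq_zero_or_pos n.toNat with h | h
    · simp [h]
    · exact_mod_cast Real.log_nonneg (by exact_mod_cast h)

lemma elog_ne_bot (n : ℕ∞) : elog n ≠ ⊥ :=
  fun h => by simpa [h] using elog_nonneg n

lemma elog_zero : elog 0 = 0 := by simp [elog]

lemma elog_top : elog ⊤ = ⊤ := by simp [elog]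

lemma elog_natCast (k : ℕ) : elog (k : ℕ∞) = ((Real.log k : ℝ) : EReal) := by
  simp [elog]

lemma elog_mono : Monotone elog := by
  intro m n hmn
  unfold elog
  rcases eq_or_ne n ⊤ with hn | hn
  · simp [hn]
  · have hm : m ≠ ⊤ := fun h => hn (top_le_iff.1 (h ▸ hmn))
    simp only [hn, hm, if_false]
    rcases Nat.eq_zero_or_pos m.toNat with h | h
    · simp only [h, Nat.cast_zero, Real.log_zero, EReal.coe_le_coe_iff]
      exact Real.log_natCast_nonneg _
    · have : m.toNat ≤ n.toNat := ENat.toNat_le_toNat hmn hn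
      exact_mod_cast Real.log_le_log (by exact_mod_cast h) (by exact_mod_cast this)

lemma elog_mul_le (m n : ℕ∞) : elog (m * n) ≤ elog m + elog n := by
  rcases eq_or_ne m 0 with rfl | hm0
  · rw [zero_mul, elog_zero]
    simpa using elog_nonneg n
  rcases eq_or_ne n 0 with rfl | hn0
  · rw [mul_zero, elog_zero]
    simpa using elog_nonneg m
  rcases eq_or_ne m ⊤ with rfl | hm
  · rw [elog_top, EReal.top_add_of_ne_bot (elog_ne_bot n)]
    exact le_top
  rcases eq_or_ne n ⊤ with rfl | hn
  · rw [elog_top, EReal.add_top_of_ne_bot (elog_ne_bot m)]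
    exact le_top
  lift m to ℕ using hm
  lift n to ℕ using hn
  rw [← Nat.cast_mul, elog_natCast, elog_natCast, elog_natCast, ← EReal.coe_add,
    EReal.coe_le_coe_iff, Nat.cast_mul]
  have hm1 : (m : ℝ) ≠ 0 := by
    exact_mod_cast fun h => hm0 (by exact_mod_cast h)
  have hn1 : (n : ℝ) ≠ 0 := by
    exact_mod_cast fun h => hn0 (by exact_mod_cast h)
  rw [Real.log_mul hm1 hn1]

lemma coverNum_le {X : Type*} [MetricSpace X] {r : ℝ} {Ω : Set X} {s : Finset X}
    (h : Ω ⊆ ⋃ x ∈ s, Metric.ball x r) : coverNum r Ω ≤ s.card :=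
  sInf_le ⟨s, h, rfl⟩

lemma coverNum_exists {X : Type*} [MetricSpace X] {r : ℝ} {Ω : Set X}
    (h : coverNum r Ω ≠ ⊤) :
    ∃ s : Finset X, (Ω ⊆ ⋃ x ∈ s, Metric.ball x r) ∧ coverNum r Ω = s.card := by
  have hne : ((fun s : Finset X => (s.card : ℕ∞)) ''
      {s : Finset X | Ω ⊆ ⋃ x ∈ s, Metric.ball x r}).Nonempty := by
    by_contra hc
    rw [not_nonempty_iff_eq_empty] at hc
    rw [coverNum, hc, sInf_empty] at h
    exact h rfl
  obtain ⟨s, hs, hcard⟩ := csInf_mem hne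
  exact ⟨s, hs, hcard.symm⟩

lemma coverNum_eq_zero {X : Type*} [MetricSpace X] {r : ℝ} {Ω : Set X}
    (h : coverNum r Ω = 0) : Ω = ∅ := by
  obtain ⟨s, hs, hcard⟩ := coverNum_exists (h ▸ (by simp : (0:ℕ∞) ≠ ⊤))
  rw [h] at hcard
  have : s = ∅ := Finset.card_eq_zero.1 (by exact_mod_cast hcard.symm)
  subst this
  simpa using hs

lemma coverNum_prod_le {X Y : Type*} [MetricSpace X] [MetricSpace Y] (r r' : ℝ)
    (A : Set X) (B : Set Y) :
    coverNum (max r r') (A ×ˢ B) ≤ coverNum r A * coverNum r' B := by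
  rcases eq_or_ne (coverNum r A) 0 with hA0 | hA0
  · have : A = ∅ := coverNum_eq_zero hA0
    subst this
    have : (∅ : Set X) ×ˢ B = (∅ : Set (X × Y)) := by simp
    rw [this]
    exact le_trans (coverNum_le (s := ∅) (by simp)) (by simp)
  rcases eq_or_ne (coverNum r' B) 0 with hB0 | hB0
  · have : B = ∅ := coverNum_eq_zero hB0
    subst this
    have : A ×ˢ (∅ : Set Y) = (∅ : Set (X × Y)) := by simp
    rw [this]
    exact le_trans (coverNum_le (s := ∅) (by simp)) (by simp)
  rcases eq_or_ne (coverNum r A) ⊤ with hA | hA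
  · rw [hA, ENat.top_mul hB0]; exact le_top
  rcases eq_or_ne (coverNum r' B) ⊤ with hB | hB
  · rw [hB, ENat.mul_top hA0]; exact le_top
  obtain ⟨s, hs, hscard⟩ := coverNum_exists hA
  obtain ⟨t, ht, htcard⟩ := coverNum_exists hB
  have hcov : A ×ˢ B ⊆ ⋃ p ∈ s ×ˢ t, Metric.ball p (max r r') := by
    rintro ⟨a, b⟩ ⟨ha, hb⟩
    obtain ⟨a', ha's, ha'⟩ := Set.mem_iUnion₂.1 (hs ha)
    obtain ⟨b', hb't, hb'⟩ := Set.mem_iUnion₂.1 (ht hb)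
    refine Set.mem_iUnion₂.2 ⟨(a', b'), Finset.mem_product.2 ⟨ha's, hb't⟩, ?_⟩
    rw [Metric.mem_ball, Prod.dist_eq]
    exact max_lt_max (Metric.mem_ball.1 ha') (Metric.mem_ball.1 hb')
  calc coverNum (max r r') (A ×ˢ B) ≤ ((s ×ˢ t).card : ℕ∞) := coverNum_le hcov
    _ = (s.card : ℕ∞) * t.card := by rw [Finset.card_product]; exact_mod_cast Nat.cast_mul _ _
    _ = coverNum r A * coverNum r' B := by rw [hscard, htcard]

lemma ereal_ne_bot_of_nonneg {a : EReal} (h : 0 ≤ a) : a ≠ ⊥ := by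
  intro hb; rw [hb] at h; simp at h

lemma key_limsup_nonneg {X : Type*} [MetricSpace X] (x : X) (r : ℝ) :
    0 ≤ Filter.limsup
      (fun R : ℝ => ((Real.log R)⁻¹ : EReal) * elog (coverNum r (Metric.ball x R)))
      Filter.atTop := by
  have h : ∀ᶠ R : ℝ in atTop,
      (fun _ : ℝ => (0:EReal)) R ≤ ((Real.log R)⁻¹ : EReal) * elog (coverNum r (Metric.ball x R)) := by
    filter_upwards [eventually_gt_atTop (1:ℝ)] with R hR
    have hc : (0:EReal) ≤ ((Real.log R)⁻¹ : EReal) :=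
      EReal.inv_nonneg_of_nonneg (EReal.coe_nonneg.2 (Real.log_pos hR).le)
    calc (0:EReal) = ((Real.log R)⁻¹ : EReal) * 0 := by rw [mul_zero]
      _ ≤ _ := mul_le_mul_of_nonneg_left (elog_nonneg _) hc
  calc (0:EReal) = limsup (fun _ : ℝ => (0:EReal)) atTop := (limsup_const _).symm
    _ ≤ _ := limsup_le_limsup h

lemma asympDim_nonneg {X : Type*} [MetricSpace X] (x : X) : 0 ≤ asympDim x :=
  le_iInf fun r => le_iInf fun _ => key_limsup_nonneg x r

lemma key_pointwise {X Y : Type*} [MetricSpace X] [MetricSpace Y] (x : X) (y : Y)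
    (r r' R : ℝ) (hR : 1 < R) :
    ((Real.log R)⁻¹ : EReal) * elog (coverNum (max r r') (Metric.ball ((x, y) : X × Y) R))
      ≤ ((Real.log R)⁻¹ : EReal) * elog (coverNum r (Metric.ball x R))
        + ((Real.log R)⁻¹ : EReal) * elog (coverNum r' (Metric.ball y R)) := by
  have hc : (0:EReal) ≤ ((Real.log R)⁻¹ : EReal) :=
    EReal.inv_nonneg_of_nonneg (EReal.coe_nonneg.2 (Real.log_pos hR).le)
  have hball : Metric.ball ((x, y) : X × Y) R = Metric.ball x R ×ˢ Metric.ball y R :=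
    (ball_prod_same x y R).symm
  rw [hball, ← EReal.left_distrib_of_nonneg (elog_nonneg _) (elog_nonneg _)]
  exact mul_le_mul_of_nonneg_left
    ((elog_mono (coverNum_prod_le r r' _ _)).trans (elog_mul_le _ _)) hc

lemma key_limsup {X Y : Type*} [MetricSpace X] [MetricSpace Y] (x : X) (y : Y) (r r' : ℝ) :
    Filter.limsup (fun R : ℝ =>
        ((Real.log R)⁻¹ : EReal) * elog (coverNum (max r r') (Metric.ball ((x, y) : X × Y) R)))
      Filter.atTop
      ≤ Filter.limsup (fun R : ℝ =>
          ((Real.log R)⁻¹ : EReal) * elog (coverNum r (Metric.ball x R))) Filter.atTop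
        + Filter.limsup (fun R : ℝ =>
          ((Real.log R)⁻¹ : EReal) * elog (coverNum r' (Metric.ball y R))) Filter.atTop := by
  set u : ℝ → EReal := fun R => ((Real.log R)⁻¹ : EReal) * elog (coverNum r (Metric.ball x R))
  set v : ℝ → EReal := fun R => ((Real.log R)⁻¹ : EReal) * elog (coverNum r' (Metric.ball y R))
  have h1 : Filter.limsup (fun R : ℝ =>
      ((Real.log R)⁻¹ : EReal) * elog (coverNum (max r r') (Metric.ball ((x, y) : X × Y) R)))
      Filter.atTop ≤ Filter.limsup (u + v) Filter.atTop := by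
    refine limsup_le_limsup ?_
    filter_upwards [eventually_gt_atTop (1:ℝ)] with R hR
    exact key_pointwise x y r r' R hR
  refine h1.trans (EReal.limsup_add_le (Or.inl ?_) (Or.inr ?_))
  · exact (ereal_ne_bot_of_nonneg (key_limsup_nonneg x r))
  · exact (ereal_ne_bot_of_nonneg (key_limsup_nonneg y r'))

lemma asympDim_prod_le {X Y : Type*} [MetricSpace X] [MetricSpace Y] (x : X) (y : Y) :
    asympDim ((x, y) : X × Y) ≤ asympDim x + asympDim y := by
  have hkey : ∀ r r' : ℝ, 0 < r → 0 < r' →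
      asympDim ((x, y) : X × Y)
        ≤ Filter.limsup (fun R : ℝ =>
            ((Real.log R)⁻¹ : EReal) * elog (coverNum r (Metric.ball x R))) Filter.atTop
          + Filter.limsup (fun R : ℝ =>
            ((Real.log R)⁻¹ : EReal) * elog (coverNum r' (Metric.ball y R))) Filter.atTop := by
    intro r r' hr hr'
    refine le_trans ?_ (key_limsup x y r r')
    exact iInf₂_le (max r r') (lt_max_of_lt_left hr)
  have hA0 : 0 ≤ asympDim x := asympDim_nonneg x
  have hB0 : 0 ≤ asympDim y := asympDim_nonneg y
  rcases eq_or_ne (asympDim x) ⊤ with hA | hA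
  · rw [hA, EReal.top_add_of_ne_bot (ereal_ne_bot_of_nonneg hB0)]
    exact le_top
  rcases eq_or_ne (asympDim y) ⊤ with hB | hB
  · rw [hB, EReal.add_top_of_ne_bot (ereal_ne_bot_of_nonneg hA0)]
    exact le_top
  set α := (asympDim x).toReal with hα
  set β := (asympDim y).toReal with hβ
  have hAr : ((α : ℝ) : EReal) = asympDim x := EReal.coe_toReal hA (ereal_ne_bot_of_nonneg hA0)
  have hBr : ((β : ℝ) : EReal) = asympDim y := EReal.coe_toReal hB (ereal_ne_bot_of_nonneg hB0)
  by_contra hcon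
  push_neg at hcon
  obtain ⟨w, hw1, hw2⟩ := EReal.exists_between_coe_real hcon
  have hαβw : α + β < w := by
    rw [← hAr, ← hBr, ← EReal.coe_add] at hw1
    exact_mod_cast hw1
  set ε := (w - (α + β)) / 2 with hε
  have hεpos : 0 < ε := by rw [hε]; linarith
  have h1 : asympDim x < ((α + ε : ℝ) : EReal) := by
    rw [← hAr]; exact_mod_cast (by linarith : α < α + ε)
  have h2 : asympDim y < ((β + ε : ℝ) : EReal) := by
    rw [← hBr]; exact_mod_cast (by linarith : β < β + ε)
  rw [asympDim, iInf_lt_iff] at h1 h2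
  obtain ⟨r, hr⟩ := h1
  rw [iInf_lt_iff] at hr
  obtain ⟨hrpos, hr⟩ := hr
  obtain ⟨r', hr'⟩ := h2
  rw [iInf_lt_iff] at hr'
  obtain ⟨hr'pos, hr'⟩ := hr'
  have hfin := (hkey r r' hrpos hr'pos).trans (add_le_add hr.le hr'.le)
  rw [← EReal.coe_add] at hfin
  have hw : (α + ε) + (β + ε) = w := by rw [hε]; ring
  rw [hw] at hfin
  exact absurd (hfin.trans_lt hw2) (lt_irrefl _)

/-- Theorem 1.2.5 (iii): `d∞(X × Y) ≤ d∞(X) + d∞(Y)`, where `X × Y` carries the sup metric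
`δ((x₁,y₁),(x₂,y₂)) = max (δ_X x₁ x₂) (δ_Y y₁ y₂)` (the default product metric). -/
theorem stmt13 {X Y : Type*} [MetricSpace X] [MetricSpace Y] [Nonempty X] [Nonempty Y] :
    asympDimSpace (X × Y) ≤ asympDimSpace X + asympDimSpace Y := by
  rw [asympDimSpace]
  refine iSup_le ?_
  rintro ⟨x, y⟩
  exact (asympDim_prod_le x y).trans
    (add_le_add (le_iSup (fun x : X => asympDim x) x) (le_iSup (fun y : Y => asympDim y) y))
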